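/- Let A = k[X_1,…,X_n], I an ideal with R = A/I smooth over k, and γ : Ω_{A/k} ⊗_A R → I/I² an R-linear splitting of the conormal sequence. Define d_1 : A → I/I² by d_1(f) = γ(df ⊗ 1) and d_0 : A → R the natural quotient. Then d_1 restricted to I equals the natural map I → I/I², and the assignment X_i ↦ d_0(X_i) + d_1(X_i) extends to a well-defined k-algebra homomorphism d : A → S(I/I²) whose degree-0 component is d_0 and degree-1 component is d_1. -/

import Mathlib

open KaehlerDifferential TensorProduct

set_option synthInstance.maxHeartbeats 1000000
set_option maxHeartbeats 1000000

lemma aux_mul0 {R S : Type*} [CommRing R] [CommRing S] [Algebra R S]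
    (𝒜 : ℕ → Submodule R S) [GradedAlgebra 𝒜] {x : S} (hx : x ∈ 𝒜 0) (y : S) (n : ℕ) :
    (DirectSum.decompose 𝒜 (x * y) n : S) = x * (DirectSum.decompose 𝒜 y n : S) := by
  induction y using DirectSum.Decomposition.inductionOn 𝒜 with
  | zero => simp
  | @homogeneous j m =>
    have hxm : x * (m : S) ∈ 𝒜 j := by
      simpa using SetLike.mul_mem_graded hx m.2
    rcases eq_or_ne j n with rfl | hne
    · rw [DirectSum.decompose_of_mem_same 𝒜 hxm, DirectSum.decompose_of_mem_same 𝒜 m.2]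
    · rw [DirectSum.decompose_of_mem_ne 𝒜 hxm hne, DirectSum.decompose_of_mem_ne 𝒜 m.2 hne,
        mul_zero]
  | add a b ha hb =>
    rw [mul_add, DirectSum.decompose_add, DirectSum.decompose_add]
    rw [DirectSum.add_apply, DirectSum.add_apply]
    push_cast
    rw [ha, hb, mul_add]

lemma aux_mul1_zero {R S : Type*} [CommRing R] [CommRing S] [Algebra R S]
    (𝒜 : ℕ → Submodule R S) [GradedAlgebra 𝒜] {x : S} (hx : x ∈ 𝒜 1) (y : S) :
    (DirectSum.decompose 𝒜 (x * y) 0 : S) = 0 := by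
  induction y using DirectSum.Decomposition.inductionOn 𝒜 with
  | zero => simp
  | @homogeneous j m =>
    have hxm : x * (m : S) ∈ 𝒜 (1 + j) := SetLike.mul_mem_graded hx m.2
    rw [DirectSum.decompose_of_mem_ne 𝒜 hxm (by omega)]
  | add a b ha hb =>
    rw [mul_add, DirectSum.decompose_add, DirectSum.add_apply]
    push_cast
    rw [ha, hb, add_zero]

lemma aux_mul1_one {R S : Type*} [CommRing R] [CommRing S] [Algebra R S]
    (𝒜 : ℕ → Submodule R S) [GradedAlgebra 𝒜] {x : S} (hx : x ∈ 𝒜 1) (y : S) :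
    (DirectSum.decompose 𝒜 (x * y) 1 : S) = x * (DirectSum.decompose 𝒜 y 0 : S) := by
  induction y using DirectSum.Decomposition.inductionOn 𝒜 with
  | zero => simp
  | @homogeneous j m =>
    have hxm : x * (m : S) ∈ 𝒜 (1 + j) := SetLike.mul_mem_graded hx m.2
    rcases eq_or_ne j 0 with rfl | hne
    · rw [DirectSum.decompose_of_mem_same 𝒜 (by simpa using hxm),
        DirectSum.decompose_of_mem_same 𝒜 m.2]
    · rw [DirectSum.decompose_of_mem_ne 𝒜 hxm (by omega),
        DirectSum.decompose_of_mem_ne 𝒜 m.2 hne, mul_zero]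
  | add a b ha hb =>
    rw [mul_add, DirectSum.decompose_add, DirectSum.decompose_add]
    rw [DirectSum.add_apply, DirectSum.add_apply]
    push_cast
    rw [ha, hb, mul_add]


/-- let `A = k[X₁,…,Xₙ]`, `I` an ideal with `R = A/I` smooth over `k`,
and `γ : Ω_{A/k} ⊗_A R → I/I²` an `R`-linear splitting of the conormal sequence.
Set `d₁(f) = γ(df ⊗ 1)` and `d₀ : A → R` the natural quotient.  Then `d₁` restricted to
`I` is the natural map `I → I/I²`, and `Xᵢ ↦ d₀(Xᵢ) + d₁(Xᵢ)` extends to a `k`-algebra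
homomorphism `d : A → S(I/I²)` whose degree zero component is `d₀` and degree one
component is `d₁`.  (Here `S` is a model of the symmetric algebra `S(I/I²)`: a graded
`A`-algebra whose degree zero part contains `R` via `e₀` and degree one part contains
`I/I²` via `ε₁`.) -/
theorem stmt9 {k : Type*} [Field k] [CharZero k] {n : ℕ}
    {S : Type*} [CommRing S]
    [Algebra (MvPolynomial (Fin n) k) S] [Algebra k S]
    [IsScalarTower k (MvPolynomial (Fin n) k) S]
    (I : Ideal (MvPolynomial (Fin n) k))
    [Algebra.Smooth k (MvPolynomial (Fin n) k ⧸ I)]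
    (𝒜 : ℕ → Submodule (MvPolynomial (Fin n) k) S) [GradedAlgebra 𝒜]
    (e0 : (MvPolynomial (Fin n) k ⧸ I) →+* S)
    (he0 : ∀ x, e0 x ∈ 𝒜 0)
    (he0' : ∀ a : MvPolynomial (Fin n) k,
      e0 (Ideal.Quotient.mk I a) = algebraMap (MvPolynomial (Fin n) k) S a)
    (ε1 : I.Cotangent →ₗ[MvPolynomial (Fin n) k] S)
    (hε1 : ∀ m, ε1 m ∈ 𝒜 1)
    (γ : ((MvPolynomial (Fin n) k ⧸ I) ⊗[MvPolynomial (Fin n) k]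
        KaehlerDifferential k (MvPolynomial (Fin n) k))
        →ₗ[MvPolynomial (Fin n) k ⧸ I] I.Cotangent)
    -- `γ` splits the conormal map
    (hγ : ∀ x : ↥I,
      γ ((1 : MvPolynomial (Fin n) k ⧸ I) ⊗ₜ D k (MvPolynomial (Fin n) k) (x : _)) =
        I.toCotangent x) :
    -- `d₁ := γ ∘ (df ⊗ 1)` restricted to `I` is the natural map `I → I/I²`
    (∀ (f : MvPolynomial (Fin n) k) (hf : f ∈ I),
      γ ((1 : MvPolynomial (Fin n) k ⧸ I) ⊗ₜ D k (MvPolynomial (Fin n) k) f) =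
        I.toCotangent ⟨f, hf⟩) ∧
    -- and `Xᵢ ↦ d₀(Xᵢ) + d₁(Xᵢ)` extends to a `k`-algebra homomorphism with the
    -- prescribed degree zero and degree one components
    ∃ d : MvPolynomial (Fin n) k →ₐ[k] S,
      (∀ i : Fin n, d (MvPolynomial.X i) =
        e0 (Ideal.Quotient.mk I (MvPolynomial.X i)) +
          ε1 (γ ((1 : MvPolynomial (Fin n) k ⧸ I) ⊗ₜ
            D k (MvPolynomial (Fin n) k) (MvPolynomial.X i)))) ∧
      (∀ a : MvPolynomial (Fin n) k,
        (DirectSum.decompose 𝒜 (d a) 0 : S) = e0 (Ideal.Quotient.mk I a)) ∧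
      (∀ a : MvPolynomial (Fin n) k,
        (DirectSum.decompose 𝒜 (d a) 1 : S) =
          ε1 (γ ((1 : MvPolynomial (Fin n) k ⧸ I) ⊗ₜ
            D k (MvPolynomial (Fin n) k) a))) := by
    classical
  set A := MvPolynomial (Fin n) k with hA
  refine ⟨fun f hf => hγ ⟨f, hf⟩, ?_⟩
  -- the degree one map
  set d1 : A → S := fun a =>
    ε1 (γ ((1 : A ⧸ I) ⊗ₜ D k A a)) with hd1def
  have hγs : ∀ (p : A) z, γ (p • z) = p • γ z := by
    intro p z
    rw [← algebraMap_smul (A ⧸ I) p z, map_smul, algebraMap_smul]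
  have hd1leib : ∀ p q : A, d1 (p * q) =
      algebraMap A S p * d1 q + algebraMap A S q * d1 p := by
    intro p q
    simp only [hd1def]
    rw [Derivation.leibniz, tmul_add, map_add, map_add, tmul_smul, tmul_smul,
      hγs, hγs, map_smul, map_smul, Algebra.smul_def, Algebra.smul_def]
  have hd1add : ∀ p q : A, d1 (p + q) = d1 p + d1 q := by
    intro p q
    simp only [hd1def, map_add, tmul_add]
  have hd1C : ∀ c : k, d1 (MvPolynomial.C c) = 0 := by
    intro c
    simp only [hd1def, ← MvPolynomial.algebraMap_eq, Derivation.map_algebraMap,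
      tmul_zero, map_zero]
    rw [show (D k A) ((algebraMap k (MvPolynomial (Fin n) k)) c) = 0 from
      (D k A).map_algebraMap c, tmul_zero, map_zero, map_zero]
  set d : A →ₐ[k] S := MvPolynomial.aeval
    (fun i => e0 (Ideal.Quotient.mk I (MvPolynomial.X i)) + d1 (MvPolynomial.X i))
    with hddef
  have hdX : ∀ i, d (MvPolynomial.X i) =
      e0 (Ideal.Quotient.mk I (MvPolynomial.X i)) + d1 (MvPolynomial.X i) := by
    intro i; exact MvPolynomial.aeval_X _ i
  have key : ∀ a : A, (DirectSum.decompose 𝒜 (d a) 0 : S) =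
      e0 (Ideal.Quotient.mk I a) ∧
      (DirectSum.decompose 𝒜 (d a) 1 : S) = d1 a := by
    intro a
    induction a using MvPolynomial.induction_on with
    | C c =>
      have hdC : d (MvPolynomial.C c) = e0 (Ideal.Quotient.mk I (MvPolynomial.C c)) := by
        rw [hddef, MvPolynomial.aeval_C, he0', ← MvPolynomial.algebraMap_eq,
          ← IsScalarTower.algebraMap_apply]
      constructor
      · rw [hdC, DirectSum.decompose_of_mem_same 𝒜 (he0 _)]
      · rw [hdC, DirectSum.decompose_of_mem_ne 𝒜 (he0 _) (by omega), hd1C]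
    | add p q hp hq =>
      constructor
      · rw [map_add, DirectSum.decompose_add, DirectSum.add_apply]
        push_cast
        rw [hp.1, hq.1, map_add, map_add]
      · rw [map_add, DirectSum.decompose_add, DirectSum.add_apply]
        push_cast
        rw [hp.2, hq.2, hd1add]
    | mul_X p i hp =>
      have hsplit : d (p * MvPolynomial.X i) =
          e0 (Ideal.Quotient.mk I (MvPolynomial.X i)) * d p +
          d1 (MvPolynomial.X i) * d p := by
        rw [map_mul, hdX, mul_comm, add_mul]
      constructor
      · rw [hsplit, DirectSum.decompose_add, DirectSum.add_apply]
        push_cast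
        rw [aux_mul0 𝒜 (he0 _) (d p) 0, aux_mul1_zero 𝒜 (hε1 _) (d p), hp.1,
          add_zero, ← map_mul, ← map_mul, mul_comm]
      · rw [hsplit, DirectSum.decompose_add, DirectSum.add_apply]
        push_cast
        rw [aux_mul0 𝒜 (he0 _) (d p) 1, aux_mul1_one 𝒜 (hε1 _) (d p), hp.1, hp.2,
          hd1leib p (MvPolynomial.X i), ← he0' p, ← he0' (MvPolynomial.X i)]
        ring
  exact ⟨d, hdX, fun a => (key a).1, fun a => (key a).2⟩
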